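/- For every 1/2 < F < 1 and every target F_t < 1, there exists N ∈ ℕ such that the N-th iterate gᴺ(F) ≥ F_t, where g(F) = (10F² − 2F + 1)/(8F² − 4F + 5). -/

import Mathlib

noncomputable def g (F : ℝ) : ℝ := (10 * F ^ 2 - 2 * F + 1) / (8 * F ^ 2 - 4 * F + 5)

lemma denom_pos (x : ℝ) : 0 < 8 * x ^ 2 - 4 * x + 5 := by nlinarith [sq_nonneg (4 * x - 1)]

theorem recurrence_reaches_target (F Ft : ℝ) (h1 : 1 / 2 < F) (h2 : F < 1) (hFt : Ft < 1) :
    ∃ N : ℕ, Ft ≤ g^[N] F := by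
  set c : ℝ := 1 - (4 * F - 1) * (2 * F - 1) / 9 with hc
  have hp0 : 0 < (4 * F - 1) * (2 * F - 1) := by nlinarith
  have hp9 : (4 * F - 1) * (2 * F - 1) < 9 := by nlinarith
  have hc0 : 0 < c := by rw [hc]; linarith
  have hc1 : c < 1 := by rw [hc]; linarith
  -- key invariant
  have key : ∀ n : ℕ, F ≤ g^[n] F ∧ g^[n] F < 1 ∧ 1 - g^[n] F ≤ c ^ n * (1 - F) := by
    intro n
    induction n with
    | zero => exact ⟨by simp, by simpa using h2, by simp⟩
    | succ n ih =>
      obtain ⟨hF, hlt, hbd⟩ := ih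
      set x := g^[n] F with hx
      have hD : 0 < 8 * x ^ 2 - 4 * x + 5 := denom_pos x
      rw [Function.iterate_succ_apply', ← hx]
      have hg : g x = (10 * x ^ 2 - 2 * x + 1) / (8 * x ^ 2 - 4 * x + 5) := rfl
      have hxg : x ≤ g x := by
        rw [hg, le_div_iff₀ hD]
        nlinarith [mul_nonneg (mul_nonneg (le_of_lt (by linarith : (0:ℝ) < 1 - x))
          (by linarith : (0:ℝ) ≤ 4 * x - 1)) (by linarith : (0:ℝ) ≤ 2 * x - 1)]
      have hg1 : g x < 1 := by
        rw [hg, div_lt_one hD]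
        nlinarith
      refine ⟨le_trans hF hxg, hg1, ?_⟩
      have hstep : 1 - g x ≤ c * (1 - x) := by
        have hrw : 1 - g x = (-2 * x ^ 2 - 2 * x + 4) / (8 * x ^ 2 - 4 * x + 5) := by
          rw [hg, one_sub_div hD.ne']; congr 1; ring
        rw [hrw, div_le_iff₀ hD, hc]
        have h9 : 8 * x ^ 2 - 4 * x + 5 ≤ 9 := by nlinarith
        have hmono : (4 * F - 1) * (2 * F - 1) ≤ (4 * x - 1) * (2 * x - 1) := by nlinarith
        have hkey : (4 * F - 1) * (2 * F - 1) * (8 * x ^ 2 - 4 * x + 5) ≤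
            9 * ((4 * x - 1) * (2 * x - 1)) := by nlinarith
        nlinarith [mul_nonneg (by linarith : (0:ℝ) ≤ 1 - x) (sub_nonneg.2 hkey)]
      calc 1 - g x ≤ c * (1 - x) := hstep
        _ ≤ c * (c ^ n * (1 - F)) := by
            apply mul_le_mul_of_nonneg_left hbd (le_of_lt hc0)
        _ = c ^ (n + 1) * (1 - F) := by ring
  -- choose N
  have hF1 : (0:ℝ) < 1 - F := by linarith
  obtain ⟨N, hN⟩ := exists_pow_lt_of_lt_one
    (div_pos (by linarith : (0:ℝ) < 1 - Ft) hF1) hc1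
  refine ⟨N, ?_⟩
  obtain ⟨_, _, hbd⟩ := key N
  have hfin : c ^ N * (1 - F) < 1 - Ft := (lt_div_iff₀ hF1).mp hN
  linarith
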